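/- Let F : ℝ^K → ℝ₊ be a nonnegative differentiable function, let t ∈ ℕ, L > 0, a₀ ∈ ℝ^K, set λ = 1/L and define a_{k+1} = a_k − λ·(∇F)(a_k) for k ∈ {0,1,…,t−1}. Assume ‖(∇F)(a)‖ ≤ √(2·t·L·max{F(a₀),1}) for all a with ‖a − a₀‖ ≤ √(2·t·max{F(a₀),1}/L), and ‖(∇F)(a) − (∇F)(b)‖ ≤ L·‖a − b‖ for all a, b with ‖a − a₀‖ ≤ √(8·(t/L)·max{F(a₀),1}) and ‖b − a₀‖ ≤ √(8·(t/L)·max{F(a₀),1}). Then: (i) ‖a_k − a₀‖ ≤ √(2·(k/L)·(F(a₀) − F(a_k))) for all k ∈ {1,…,t}; (ii) Σ_{k=0}^{s−1} ‖a_{k+1} − a_k‖² ≤ (2/L)·(F(a₀) − F(a_s)) for all s ∈ {1,…,t}; and (iii) F(a_k) ≤ F(a_{k−1}) for all k ∈ {1,…,t}. -/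

import Mathlib

open MeasureTheory

noncomputable section

local notation "⟪" x ", " y "⟫" => @inner ℝ _ _ x y

lemma descent_aux {K : ℕ} {F : EuclideanSpace ℝ (Fin K) → ℝ}
    (hFdiff : Differentiable ℝ F) {L : ℝ}
    (x d : EuclideanSpace ℝ (Fin K))
    (hseg : ∀ τ : ℝ, τ ∈ Set.Icc (0:ℝ) 1 →
      ‖gradient F (x + τ • d) - gradient F x‖ ≤ L * (τ * ‖d‖)) :
    F (x + d) ≤ F x + ⟪gradient F x, d⟫ + L / 2 * ‖d‖ ^ 2 := by
  set c : ℝ := ⟪gradient F x, d⟫ with hc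
  set h : ℝ → ℝ := fun τ => F (x + τ • d) - τ * c - L / 2 * τ ^ 2 * ‖d‖ ^ 2 with hh
  have hderiv : ∀ τ : ℝ, HasDerivAt h
      (⟪gradient F (x + τ • d), d⟫ - c - L * τ * ‖d‖ ^ 2) τ := by
    intro τ
    have hcurve : HasDerivAt (fun τ : ℝ => x + τ • d) d τ := by
      simpa using ((hasDerivAt_id τ).smul_const d).const_add x
    have hF : HasDerivAt (fun τ : ℝ => F (x + τ • d))
        ((fderiv ℝ F (x + τ • d)) d) τ :=
      (hFdiff (x + τ • d)).hasFDerivAt.comp_hasDerivAt τ hcurve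
    have hfd : (fderiv ℝ F (x + τ • d)) d = ⟪gradient F (x + τ • d), d⟫ := by
      rw [(hFdiff (x + τ • d)).hasGradientAt.hasFDerivAt.fderiv]
      exact InnerProductSpace.toDual_apply_apply
    rw [hfd] at hF
    have h1 : HasDerivAt (fun τ : ℝ => τ * c) c τ := by
      simpa using (hasDerivAt_id τ).mul_const c
    have h2 : HasDerivAt (fun τ : ℝ => L / 2 * τ ^ 2 * ‖d‖ ^ 2)
        (L * τ * ‖d‖ ^ 2) τ := by
      have := ((hasDerivAt_pow 2 τ).const_mul (L / 2)).mul_const (‖d‖ ^ 2)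
      exact this.congr_deriv (by ring)
    exact (hF.sub h1).sub h2
  have hdiff : Differentiable ℝ h := fun τ => (hderiv τ).differentiableAt
  have hanti : AntitoneOn h (Set.Icc 0 1) := by
    apply antitoneOn_of_deriv_nonpos (convex_Icc 0 1) hdiff.continuous.continuousOn
      hdiff.differentiableOn
    intro τ hτ
    rw [interior_Icc] at hτ
    rw [(hderiv τ).deriv]
    have hτ01 : τ ∈ Set.Icc (0:ℝ) 1 := ⟨le_of_lt hτ.1, le_of_lt hτ.2⟩
    have hinner : ⟪gradient F (x + τ • d), d⟫ - c
        = ⟪gradient F (x + τ • d) - gradient F x, d⟫ := by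
      rw [inner_sub_left]
    have hb : ⟪gradient F (x + τ • d) - gradient F x, d⟫ ≤ L * (τ * ‖d‖) * ‖d‖ :=
      le_trans (real_inner_le_norm _ _)
        (mul_le_mul_of_nonneg_right (hseg τ hτ01) (norm_nonneg d))
    nlinarith [hb, hinner]
  have h10 : h 1 ≤ h 0 := hanti (Set.mem_Icc.2 ⟨le_refl 0, zero_le_one⟩)
    (Set.mem_Icc.2 ⟨zero_le_one, le_refl 1⟩) zero_le_one
  simp only [hh, one_smul, zero_smul, add_zero, one_pow, zero_pow, one_mul, zero_mul,
    mul_zero, sub_zero] at h10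
  linarith

/-- Lemma 1, localization lemma for gradient descent. -/
theorem statement8 (K : ℕ) (F : EuclideanSpace ℝ (Fin K) → ℝ)
    (hFnonneg : ∀ x, 0 ≤ F x) (hFdiff : Differentiable ℝ F)
    (t : ℕ) (L : ℝ) (hL : 0 < L)
    (a : ℕ → EuclideanSpace ℝ (Fin K))
    (hstep : ∀ k, k < t → a (k + 1) = a k - (1 / L) • gradient F (a k))
    (hgradbound : ∀ x : EuclideanSpace ℝ (Fin K),
      ‖x - a 0‖ ≤ Real.sqrt (2 * t * max (F (a 0)) 1 / L) →
      ‖gradient F x‖ ≤ Real.sqrt (2 * t * L * max (F (a 0)) 1))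
    (hgradlip : ∀ x y : EuclideanSpace ℝ (Fin K),
      ‖x - a 0‖ ≤ Real.sqrt (8 * (t / L) * max (F (a 0)) 1) →
      ‖y - a 0‖ ≤ Real.sqrt (8 * (t / L) * max (F (a 0)) 1) →
      ‖gradient F x - gradient F y‖ ≤ L * ‖x - y‖) :
    (∀ k, 1 ≤ k → k ≤ t →
        ‖a k - a 0‖ ≤ Real.sqrt (2 * ((k : ℝ) / L) * (F (a 0) - F (a k)))) ∧
    (∀ s, 1 ≤ s → s ≤ t →
        ∑ k ∈ Finset.range s, ‖a (k + 1) - a k‖ ^ 2 ≤ (2 / L) * (F (a 0) - F (a s))) ∧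
    (∀ k, 1 ≤ k → k ≤ t → F (a k) ≤ F (a (k - 1))) := by
  set M : ℝ := max (F (a 0)) 1 with hM
  have hM1 : (1:ℝ) ≤ M := le_max_right _ _
  have hM0 : F (a 0) ≤ M := le_max_left _ _
  have hMpos : (0:ℝ) < M := lt_of_lt_of_le one_pos hM1
  set R1 : ℝ := Real.sqrt (2 * t * M / L) with hR1
  have hR1nonneg : 0 ≤ R1 := Real.sqrt_nonneg _
  -- √(8 (t/L) M) = 2 R1
  have hR2 : Real.sqrt (8 * ((t:ℝ) / L) * M) = 2 * R1 := by
    rw [hR1, show (8 * ((t:ℝ) / L) * M) = 4 * (2 * t * M / L) by ring,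
      Real.sqrt_mul (by norm_num : (0:ℝ) ≤ 4),
      show (4:ℝ) = 2 ^ 2 by norm_num, Real.sqrt_sq (by norm_num : (0:ℝ) ≤ 2)]
  -- (1/L) √(2 t L M) = R1
  have hR1L : (1 / L) * Real.sqrt (2 * t * L * M) = R1 := by
    rw [hR1, show (2 * (t:ℝ) * L * M) = (2 * t * M / L) * L ^ 2 by
        field_simp,
      Real.sqrt_mul (by positivity) (L ^ 2), Real.sqrt_sq hL.le]
    field_simp
  -- main induction
  have key : ∀ k, k ≤ t →
      (∑ j ∈ Finset.range k, ‖a (j + 1) - a j‖ ^ 2 ≤ (2 / L) * (F (a 0) - F (a k)))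
      ∧ (∀ j, j < k → F (a (j + 1)) ≤ F (a j)) := by
    intro k
    induction k with
    | zero => intro _; simp
    | succ k ih =>
      intro hk1
      obtain ⟨hsum, hmono⟩ := ih (le_of_lt (Nat.lt_of_succ_le hk1))
      have hktlt : k < t := Nat.lt_of_succ_le hk1
      have hsumnonneg : (0:ℝ) ≤ ∑ j ∈ Finset.range k, ‖a (j + 1) - a j‖ ^ 2 :=
        Finset.sum_nonneg fun j _ => sq_nonneg _
      have h2Lpos : (0:ℝ) < 2 / L := by positivity
      have hF0k : F (a k) ≤ F (a 0) := by
        nlinarith [le_trans hsumnonneg hsum]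
      -- distance bound via Cauchy-Schwarz
      have hdistsq : ‖a k - a 0‖ ^ 2 ≤ (k : ℝ) * ((2 / L) * (F (a 0) - F (a k))) := by
        have h1 : a k - a 0 = ∑ j ∈ Finset.range k, (a (j + 1) - a j) :=
          (Finset.sum_range_sub a k).symm
        have h2 : ‖a k - a 0‖ ≤ ∑ j ∈ Finset.range k, ‖a (j + 1) - a j‖ := by
          rw [h1]; exact norm_sum_le _ _
        have h3 : (∑ j ∈ Finset.range k, ‖a (j + 1) - a j‖) ^ 2
            ≤ (k : ℝ) * ∑ j ∈ Finset.range k, ‖a (j + 1) - a j‖ ^ 2 := by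
          simpa using sq_sum_le_card_mul_sum_sq
            (s := Finset.range k) (f := fun j => ‖a (j + 1) - a j‖)
        calc ‖a k - a 0‖ ^ 2 ≤ (∑ j ∈ Finset.range k, ‖a (j + 1) - a j‖) ^ 2 := by
              apply pow_le_pow_left₀ (norm_nonneg _) h2
          _ ≤ (k : ℝ) * ∑ j ∈ Finset.range k, ‖a (j + 1) - a j‖ ^ 2 := h3
          _ ≤ (k : ℝ) * ((2 / L) * (F (a 0) - F (a k))) := by
              apply mul_le_mul_of_nonneg_left hsum (Nat.cast_nonneg k)
      have hkt : (k : ℝ) ≤ (t : ℝ) := Nat.cast_le.2 hktlt.le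
      have hdist : ‖a k - a 0‖ ≤ R1 := by
        rw [hR1]
        rw [show ‖a k - a 0‖ = Real.sqrt (‖a k - a 0‖ ^ 2) by
          rw [Real.sqrt_sq (norm_nonneg _)]]
        apply Real.sqrt_le_sqrt
        calc ‖a k - a 0‖ ^ 2 ≤ (k : ℝ) * ((2 / L) * (F (a 0) - F (a k))) := hdistsq
          _ ≤ (t : ℝ) * ((2 / L) * M) := by
              apply mul_le_mul hkt _ (mul_nonneg h2Lpos.le (by linarith [hFnonneg (a k)])) (Nat.cast_nonneg t)
              apply mul_le_mul_of_nonneg_left _ h2Lpos.le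
              linarith [hFnonneg (a k)]
          _ = 2 * t * M / L := by ring
      -- gradient bound at a k
      have hgb : ‖gradient F (a k)‖ ≤ Real.sqrt (2 * t * L * M) := hgradbound _ hdist
      set d : EuclideanSpace ℝ (Fin K) := a (k + 1) - a k with hd
      have hdval : d = -((1 / L) • gradient F (a k)) := by
        rw [hd, hstep k hktlt]; abel
      have hdnorm : ‖d‖ = (1 / L) * ‖gradient F (a k)‖ := by
        rw [hdval, norm_neg, norm_smul, Real.norm_eq_abs, abs_of_pos (by positivity)]
      have hdR1 : ‖d‖ ≤ R1 := by
        rw [hdnorm, ← hR1L]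
        exact mul_le_mul_of_nonneg_left hgb (by positivity)
      -- segment Lipschitz hypothesis
      have hseg : ∀ τ : ℝ, τ ∈ Set.Icc (0:ℝ) 1 →
          ‖gradient F (a k + τ • d) - gradient F (a k)‖ ≤ L * (τ * ‖d‖) := by
        intro τ hτ
        have hx : ‖a k + τ • d - a 0‖ ≤ Real.sqrt (8 * ((t:ℝ) / L) * M) := by
          rw [hR2]
          calc ‖a k + τ • d - a 0‖ = ‖(a k - a 0) + τ • d‖ := by abel_nf
            _ ≤ ‖a k - a 0‖ + ‖τ • d‖ := norm_add_le _ _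
            _ ≤ R1 + 1 * R1 := by
                apply add_le_add hdist
                rw [norm_smul, Real.norm_eq_abs, abs_of_nonneg hτ.1]
                exact mul_le_mul hτ.2 hdR1 (norm_nonneg d) zero_le_one
            _ = 2 * R1 := by ring
        have hy : ‖a k - a 0‖ ≤ Real.sqrt (8 * ((t:ℝ) / L) * M) := by
          rw [hR2]; linarith
        have := hgradlip _ _ hx hy
        calc ‖gradient F (a k + τ • d) - gradient F (a k)‖
            ≤ L * ‖a k + τ • d - a k‖ := this
          _ = L * (τ * ‖d‖) := by
              rw [show a k + τ • d - a k = τ • d by abel, norm_smul,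
                Real.norm_eq_abs, abs_of_nonneg hτ.1]
      have hdescent := descent_aux hFdiff (a k) d hseg
      have hakd : a k + d = a (k + 1) := by rw [hd]; abel
      rw [hakd] at hdescent
      set g : ℝ := ‖gradient F (a k)‖ with hg
      have hinner : ⟪gradient F (a k), d⟫ = -(1 / L) * g ^ 2 := by
        rw [hdval, inner_neg_right, real_inner_smul_right, real_inner_self_eq_norm_sq]
        ring
      have hdsq : ‖d‖ ^ 2 = (1 / L) ^ 2 * g ^ 2 := by rw [hdnorm]; ring
      have hdec : F (a (k + 1)) + 1 / (2 * L) * g ^ 2 ≤ F (a k) := by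
        rw [hinner, hdsq] at hdescent
        have : L / 2 * ((1 / L) ^ 2 * g ^ 2) = 1 / (2 * L) * g ^ 2 := by
          field_simp
        rw [this] at hdescent
        have : -(1 / L) * g ^ 2 + 1 / (2 * L) * g ^ 2 = -(1 / (2 * L)) * g ^ 2 := by
          field_simp; ring
        linarith [hdescent]
      have hgsqnonneg : (0:ℝ) ≤ g ^ 2 := sq_nonneg g
      have h2Linv : (0:ℝ) < 1 / (2 * L) := by positivity
      have hFdec : F (a (k + 1)) ≤ F (a k) := by linarith [mul_nonneg h2Linv.le hgsqnonneg]
      have hdstep : ‖d‖ ^ 2 ≤ (2 / L) * (F (a k) - F (a (k + 1))) := by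
        rw [hdsq]
        have hkey : F (a k) - F (a (k + 1)) ≥ 1 / (2 * L) * g ^ 2 := by linarith
        have : (2 / L) * (1 / (2 * L) * g ^ 2) = (1 / L) ^ 2 * g ^ 2 := by
          field_simp
        have h5 := mul_le_mul_of_nonneg_left hkey h2Lpos.le
        linarith [h5, this]
      constructor
      · rw [Finset.sum_range_succ]
        calc (∑ j ∈ Finset.range k, ‖a (j + 1) - a j‖ ^ 2) + ‖a (k + 1) - a k‖ ^ 2
            ≤ (2 / L) * (F (a 0) - F (a k)) + (2 / L) * (F (a k) - F (a (k + 1))) := by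
              exact add_le_add hsum (by rw [← hd]; exact hdstep)
          _ = (2 / L) * (F (a 0) - F (a (k + 1))) := by ring
      · intro j hj
        rcases Nat.lt_succ_iff_lt_or_eq.1 hj with h | h
        · exact hmono j h
        · subst h; exact hFdec
  refine ⟨?_, ?_, ?_⟩
  · -- part (i)
    intro k hk1 hkt
    obtain ⟨hsum, _⟩ := key k hkt
    have h1 : a k - a 0 = ∑ j ∈ Finset.range k, (a (j + 1) - a j) :=
      (Finset.sum_range_sub a k).symm
    have h2 : ‖a k - a 0‖ ≤ ∑ j ∈ Finset.range k, ‖a (j + 1) - a j‖ := by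
      rw [h1]; exact norm_sum_le _ _
    have h3 : (∑ j ∈ Finset.range k, ‖a (j + 1) - a j‖) ^ 2
        ≤ (k : ℝ) * ∑ j ∈ Finset.range k, ‖a (j + 1) - a j‖ ^ 2 := by
      simpa using sq_sum_le_card_mul_sum_sq
        (s := Finset.range k) (f := fun j => ‖a (j + 1) - a j‖)
    have hsq : ‖a k - a 0‖ ^ 2 ≤ 2 * ((k : ℝ) / L) * (F (a 0) - F (a k)) := by
      calc ‖a k - a 0‖ ^ 2 ≤ (∑ j ∈ Finset.range k, ‖a (j + 1) - a j‖) ^ 2 :=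
            pow_le_pow_left₀ (norm_nonneg _) h2 2
        _ ≤ (k : ℝ) * ∑ j ∈ Finset.range k, ‖a (j + 1) - a j‖ ^ 2 := h3
        _ ≤ (k : ℝ) * ((2 / L) * (F (a 0) - F (a k))) :=
            mul_le_mul_of_nonneg_left hsum (Nat.cast_nonneg k)
        _ = 2 * ((k : ℝ) / L) * (F (a 0) - F (a k)) := by ring
    rw [show ‖a k - a 0‖ = Real.sqrt (‖a k - a 0‖ ^ 2) by
      rw [Real.sqrt_sq (norm_nonneg _)]]
    exact Real.sqrt_le_sqrt hsq
  · -- part (ii)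
    intro s _ hst
    exact (key s hst).1
  · -- part (iii)
    intro k hk1 hkt
    have := (key t le_rfl).2 (k - 1) (by omega)
    rwa [Nat.sub_add_cancel hk1] at this

end
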